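/- With φ⊥ := Σₐ ηₐ(ξ)φₐ, ξ⊥ := Σₐ ηₐ(ξ)ξₐ, η⊥ := Σₐ ηₐ(ξ)ηₐ, one has (φ⊥)² = -‖ξ⊥‖² I + ξ⊥⊗η⊥, i.e. φ⊥(φ⊥X) = -‖ξ⊥‖²X + η⊥(X)ξ⊥ for all X. -/

import Mathlib

open RealInnerProductSpace

/-- Pointwise setup on a real inner product space: an almost contact metric
structure `(φ, ξ, η)` together with an almost contact metric 3-structure
`(φₐ, ξₐ, ηₐ)`, `a ∈ ZMod 3`, satisfying the quaternionic contact relations and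
the compatibility relations coming from `JJₐ = JₐJ`.  Here `η x = ⟪x, ξ⟫` and
`ηₐ x = ⟪x, ξₐ⟫`. -/
structure ContactSetup (V : Type*) [NormedAddCommGroup V] [InnerProductSpace ℝ V] where
  φ : V →ₗ[ℝ] V
  ξ : V
  φa : ZMod 3 → (V →ₗ[ℝ] V)
  ξa : ZMod 3 → V
  φ_sq : ∀ x, φ (φ x) = -x + ⟪x, ξ⟫ • ξ
  ξ_unit : ⟪ξ, ξ⟫ = 1
  φ_ξ : φ ξ = 0
  φ_metric : ∀ x y, ⟪φ x, φ y⟫ = ⟪x, y⟫ - ⟪x, ξ⟫ * ⟪y, ξ⟫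
  φa_sq : ∀ a x, φa a (φa a x) = -x + ⟪x, ξa a⟫ • ξa a
  ξa_unit : ∀ a, ⟪ξa a, ξa a⟫ = 1
  φa_ξa : ∀ a, φa a (ξa a) = 0
  φa_metric : ∀ a x y, ⟪φa a x, φa a y⟫ = ⟪x, y⟫ - ⟪x, ξa a⟫ * ⟪y, ξa a⟫
  quat₁ : ∀ a x, φa a (φa (a + 1) x) - ⟪x, ξa (a + 1)⟫ • ξa a = φa (a + 2) x
  quat₂ : ∀ a x, φa (a + 2) x = -(φa (a + 1) (φa a x)) + ⟪x, ξa a⟫ • ξa (a + 1)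
  quat_ξ₁ : ∀ a, φa a (ξa (a + 1)) = ξa (a + 2)
  quat_ξ₂ : ∀ a, ξa (a + 2) = -(φa (a + 1) (ξa a))
  inter : ∀ a x, φa a (φ x) - ⟪x, ξ⟫ • ξa a = φ (φa a x) - ⟪x, ξa a⟫ • ξ
  inter_ξ : ∀ a, φ (ξa a) = φa a ξ

/-- The local symmetric tensor `θₐ := φₐφ - ξₐ ⊗ η`. -/
def ContactSetup.θa {V : Type*} [NormedAddCommGroup V] [InnerProductSpace ℝ V]
    (S : ContactSetup V) (a : ZMod 3) (x : V) : V :=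
  S.φa a (S.φ x) - ⟪x, S.ξ⟫ • S.ξa a

namespace ContactSetup

variable {V : Type*} [NormedAddCommGroup V] [InnerProductSpace ℝ V] (S : ContactSetup V)

/-- `ξ⊥ := Σₐ ηₐ(ξ) ξₐ`. -/
def ξperp : V := ∑ a : ZMod 3, ⟪S.ξ, S.ξa a⟫ • S.ξa a

/-- `η⊥ := Σₐ ηₐ(ξ) ηₐ`. -/
def ηperp (x : V) : ℝ := ∑ a : ZMod 3, ⟪S.ξ, S.ξa a⟫ * ⟪x, S.ξa a⟫

/-- `θ := Σₐ ηₐ(ξ) θₐ`. -/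
def θ (x : V) : V := ∑ a : ZMod 3, ⟪S.ξ, S.ξa a⟫ • S.θa a x

/-- `φ⊥ := Σₐ ηₐ(ξ) φₐ`. -/
def φperp (x : V) : V := ∑ a : ZMod 3, ⟪S.ξ, S.ξa a⟫ • S.φa a x

/-- `‖ξ⊥‖² = Σₐ ηₐ(ξ)²`. -/
def nsq : ℝ := ∑ a : ZMod 3, ⟪S.ξ, S.ξa a⟫ ^ 2

end ContactSetup

/-- `(φ⊥)² = -‖ξ⊥‖² I + ξ⊥ ⊗ η⊥`: for all `X`,
`φ⊥(φ⊥ X) = -‖ξ⊥‖² • X + η⊥(X) • ξ⊥`. -/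
private lemma sum3_aux {W : Type*} [AddCommMonoid W] (f : ZMod 3 → W) :
    ∑ a, f a = f 0 + f 1 + f 2 := by
  show ∑ a : Fin 3, f a = _
  exact Fin.sum_univ_three f

theorem phi_perp_sq {V : Type*} [NormedAddCommGroup V] [InnerProductSpace ℝ V]
    (S : ContactSetup V)
    (horth : ∀ a b : ZMod 3, a ≠ b → ⟪S.ξa a, S.ξa b⟫ = 0) (x : V) :
    S.φperp (S.φperp x) = -(S.nsq • x) + S.ηperp x • S.ξperp := by
  have i1 : (0 : ZMod 3) + 1 = 1 := by decide
  have i2 : (0 : ZMod 3) + 2 = 2 := by decide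
  have i3 : (1 : ZMod 3) + 1 = 2 := by decide
  have i4 : (1 : ZMod 3) + 2 = 0 := by decide
  have i5 : (2 : ZMod 3) + 1 = 0 := by decide
  have i6 : (2 : ZMod 3) + 2 = 1 := by decide
  have h01 := S.quat₁ 0 x; rw [i1, i2] at h01
  have h12 := S.quat₁ 1 x; rw [i3, i4] at h12
  have h20 := S.quat₁ 2 x; rw [i5, i6] at h20
  have h10 := S.quat₂ 0 x; rw [i1, i2] at h10
  have h21 := S.quat₂ 1 x; rw [i3, i4] at h21
  have h02 := S.quat₂ 2 x; rw [i5, i6] at h02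
  have s00 := S.φa_sq 0 x
  have s11 := S.φa_sq 1 x
  have s22 := S.φa_sq 2 x
  simp only [ContactSetup.φperp, ContactSetup.ηperp, ContactSetup.ξperp,
    ContactSetup.nsq, sum3_aux, map_add, map_smul]
  have g10 : S.φa 1 (S.φa 0 x) = -(S.φa 2 x) + ⟪x, S.ξa 0⟫ • S.ξa 1 := by
    rw [h10]; abel
  have g21 : S.φa 2 (S.φa 1 x) = -(S.φa 0 x) + ⟪x, S.ξa 1⟫ • S.ξa 2 := by
    rw [h21]; abel
  have g02 : S.φa 0 (S.φa 2 x) = -(S.φa 1 x) + ⟪x, S.ξa 2⟫ • S.ξa 0 := by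
    rw [h02]; abel
  rw [eq_add_of_sub_eq h01, eq_add_of_sub_eq h12, eq_add_of_sub_eq h20,
    g10, g21, g02, s00, s11, s22]
  module
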